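/- Let K be a *-sfield and let H be a finite-dimensional Hermitian space over K. Then the orthogonality space (P(H),⊥) satisfies conditions (L1) and (L2). -/

import Mathlib

variable {X : Type*}

/-- The orthocomplement of a subset of an orthogonality space. -/
def ortho (perp : X → X → Prop) (A : Set X) : Set X := {e | ∀ a ∈ A, perp e a}

/-- A subset is orthoclosed if it coincides with its double orthocomplement. -/
def OrthoClosed (perp : X → X → Prop) (A : Set X) : Prop :=
  ortho perp (ortho perp A) = A

/-- The orthogonality space `(X, perp)` has rank `m`: it contains `m` mutually
orthogonal elements but not `m + 1`. -/
def HasRank (perp : X → X → Prop) (m : ℕ) : Prop :=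
  (∃ D : Finset X, D.card = m ∧ (D : Set X).Pairwise perp) ∧
    ∀ D : Finset X, (D : Set X).Pairwise perp → D.card ≤ m

/-- Irredundance: elements with the same orthocomplement coincide. -/
def Irredundant (perp : X → X → Prop) : Prop :=
  ∀ e f : X, ortho perp {e} = ortho perp {f} → e = f

/-- Condition (L₁). -/
def CondL1 (perp : X → X → Prop) : Prop :=
  ∀ e f : X, f ≠ e → ∃ g : X, perp g e ∧ ortho perp {e, g} = ortho perp {e, f}

/-- Condition (L₂). -/
def CondL2 (perp : X → X → Prop) : Prop :=
  ∀ e g : X, perp g e → ∃ f : X, f ≠ e ∧ f ≠ g ∧ ortho perp {e, g} = ortho perp {e, f}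

section Proj

variable (K : Type*) [DivisionRing K] (H : Type*) [AddCommGroup H] [Module K H]

/-- The projective space of `H`: its one-dimensional subspaces. -/
def ProjPoint : Type _ :=
  {p : Submodule K H // ∃ v : H, v ≠ 0 ∧ p = Submodule.span K {v}}

variable (B : H → H → K)

/-- Orthogonality of one-dimensional subspaces with respect to the form `B`. -/
def projPerp (p q : ProjPoint K H) : Prop := ∀ u ∈ p.1, ∀ w ∈ q.1, B u w = 0

end Proj

lemma mem_ortho_pair (perp : X → X → Prop) (e g z : X) :
    z ∈ ortho perp {e, g} ↔ perp z e ∧ perp z g := by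
  simp [ortho]

section Aux
variable {K : Type*} [DivisionRing K] [StarRing K]
variable {H : Type*} [AddCommGroup H] [Module K H]
variable (B : H → H → K)

lemma span_perp_iff
    (hsmul_left : ∀ (a : K) (u v : H), B (a • u) v = a * B u v)
    (hsmul_right : ∀ (a : K) (u v : H), B u (a • v) = B u v * star a)
    {v w : H} {p q : ProjPoint K H}
    (hp : p.1 = Submodule.span K {v}) (hq : q.1 = Submodule.span K {w}) :
    projPerp K H B p q ↔ B v w = 0 := by
  constructor
  · intro h
    exact h v (hp ▸ Submodule.mem_span_singleton_self v) w
      (hq ▸ Submodule.mem_span_singleton_self w)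
  · intro h u hu z hz
    rw [hp, Submodule.mem_span_singleton] at hu
    rw [hq, Submodule.mem_span_singleton] at hz
    obtain ⟨a, rfl⟩ := hu
    obtain ⟨b, rfl⟩ := hz
    rw [hsmul_left, hsmul_right, h, zero_mul, mul_zero]
end Aux

/-- For any finite-dimensional Hermitian space `H` over a
`⋆`-sfield `K`, the orthogonality space `(P(H), ⊥)` satisfies (L₁) and (L₂). -/
theorem stmt3 (K : Type*) [DivisionRing K] [StarRing K]
    (H : Type*) [AddCommGroup H] [Module K H] [FiniteDimensional K H]
    (B : H → H → K)
    (hadd_left : ∀ u v w : H, B (u + v) w = B u w + B v w)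
    (hadd_right : ∀ u v w : H, B u (v + w) = B u v + B u w)
    (hsmul_left : ∀ (a : K) (u v : H), B (a • u) v = a * B u v)
    (hsmul_right : ∀ (a : K) (u v : H), B u (a • v) = B u v * star a)
    (hconj : ∀ u v : H, B u v = star (B v u))
    (haniso : ∀ u : H, B u u = 0 → u = 0) :
    CondL1 (projPerp K H B) ∧ CondL2 (projPerp K H B) := by
  have hBxx : ∀ x : H, x ≠ 0 → B x x ≠ 0 := fun x hx h => hx (haniso x h)
  constructor
  · -- (L1)
    intro e f hfe
    obtain ⟨x, hx0, hx⟩ := e.2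
    obtain ⟨y, hy0, hy⟩ := f.2
    set c : K := B y x * (B x x)⁻¹ with hc
    set w : H := y + (-c) • x with hwdef
    have hw0 : w ≠ 0 := by
      intro h
      apply hfe
      have hyc : y = c • x := by
        rw [hwdef, neg_smul, add_neg_eq_zero] at h
        exact h
      have hc0 : c ≠ 0 := by
        intro h0
        rw [h0, zero_smul] at hyc
        exact hy0 hyc
      apply Subtype.ext
      rw [hy, hx, hyc, Submodule.span_singleton_smul_eq (IsUnit.mk0 c hc0)]
    obtain ⟨p, hp⟩ : ∃ p : ProjPoint K H, p.1 = Submodule.span K {w} := ⟨⟨_, w, hw0, rfl⟩, rfl⟩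
    refine ⟨p, ?_, ?_⟩
    · rw [span_perp_iff B hsmul_left hsmul_right hp hx, hwdef, hadd_left,
        hsmul_left, neg_mul, hc, mul_assoc, inv_mul_cancel₀ (hBxx x hx0),
        mul_one, add_neg_cancel]
    · have hkey : ∀ u : H, B u x = 0 → B u w = B u y := by
        intro u h
        rw [hwdef, hadd_right, hsmul_right, h, zero_mul, add_zero]
      ext z
      obtain ⟨u, hu0, hu⟩ := z.2
      rw [mem_ortho_pair, mem_ortho_pair,
        span_perp_iff B hsmul_left hsmul_right hu hx,
        span_perp_iff B hsmul_left hsmul_right hu hp,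
        span_perp_iff B hsmul_left hsmul_right hu hy]
      constructor
      · rintro ⟨h1, h2⟩
        exact ⟨h1, by rw [← hkey u h1]; exact h2⟩
      · rintro ⟨h1, h2⟩
        exact ⟨h1, by rw [hkey u h1]; exact h2⟩
  · -- (L2)
    intro e g hge
    obtain ⟨x, hx0, hx⟩ := e.2
    obtain ⟨y, hy0, hy⟩ := g.2
    have hyx : B y x = 0 := (span_perp_iff B hsmul_left hsmul_right hy hx).mp hge
    have hxy : B x y = 0 := by rw [hconj, hyx, star_zero]
    have hw0 : x + y ≠ 0 := by
      intro h
      have h1 : (-1 : K) • x = y := by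
        rw [neg_smul, one_smul]
        exact neg_eq_of_add_eq_zero_right h
      rw [← h1, hsmul_left, neg_one_mul, neg_eq_zero] at hyx
      exact hx0 (haniso x hyx)
    obtain ⟨p, hp⟩ : ∃ p : ProjPoint K H, p.1 = Submodule.span K {x + y} :=
      ⟨⟨_, x + y, hw0, rfl⟩, rfl⟩
    refine ⟨p, ?_, ?_, ?_⟩
    · intro h
      have hsp : Submodule.span K {x + y} = Submodule.span K {x} := by
        have := congrArg Subtype.val h
        simpa [hx, hp] using this
      have hmem : x + y ∈ Submodule.span K {x} := by
        rw [← hsp]; exact Submodule.mem_span_singleton_self _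
      rw [Submodule.mem_span_singleton] at hmem
      obtain ⟨a, ha⟩ := hmem
      have hB : a * B x x = B x x := by
        have := congrArg (fun v => B v x) ha
        simpa [hsmul_left, hadd_left, hyx] using this
      have ha1 : a = 1 := by
        have := mul_right_cancel₀ (hBxx x hx0) (hB.trans (one_mul (B x x)).symm)
        exact this
      rw [ha1, one_smul] at ha
      exact hy0 (left_eq_add.mp ha)
    · intro h
      have hsp : Submodule.span K {x + y} = Submodule.span K {y} := by
        have := congrArg Subtype.val h
        simpa [hy, hp] using this
      have hmem : x + y ∈ Submodule.span K {y} := by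
        rw [← hsp]; exact Submodule.mem_span_singleton_self _
      rw [Submodule.mem_span_singleton] at hmem
      obtain ⟨b, hb⟩ := hmem
      have hB : b * B y y = B y y := by
        have := congrArg (fun v => B v y) hb
        simpa [hsmul_left, hadd_left, hxy] using this
      have hb1 : b = 1 := mul_right_cancel₀ (hBxx y hy0) (hB.trans (one_mul (B y y)).symm)
      rw [hb1, one_smul] at hb
      exact hx0 (right_eq_add.mp hb)
    · ext z
      obtain ⟨u, hu0, hu⟩ := z.2
      rw [mem_ortho_pair, mem_ortho_pair,
        span_perp_iff B hsmul_left hsmul_right hu hx,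
        span_perp_iff B hsmul_left hsmul_right hu hy,
        span_perp_iff B hsmul_left hsmul_right hu hp]
      constructor
      · rintro ⟨h1, h2⟩
        exact ⟨h1, by rw [hadd_right, h1, h2, add_zero]⟩
      · rintro ⟨h1, h2⟩
        rw [hadd_right, h1, zero_add] at h2
        exact ⟨h1, h2⟩
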